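/- Let K be a number field inside ℚ̄ and let d ≥ 1. The field K^(d), the compositum inside ℚ̄ of all extension fields F of K with [F:K] ≤ d, is a Galois extension of K, and every element of Gal(K^(d)/K) has order dividing d!. -/

import Mathlib

open IntermediateField Polynomial

lemma aux_pow_factorial_fix {K L : Type*} [Field K] [Field L] [Algebra K L]
    (σ : L ≃ₐ[K] L) {x : L} (hx : IsIntegral K x) {d : ℕ}
    (hdeg : (minpoly K x).natDegree ≤ d) : (σ ^ d.factorial) x = x := by
  classical
  set p := minpoly K x with hp
  have hp0 : p ≠ 0 := minpoly.ne_zero hx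
  have hmt : Set.MapsTo σ (p.rootSet L) (p.rootSet L) := rootSet_mapsTo σ.toAlgHom
  have hbij : Function.Bijective (hmt.restrict σ _ _) :=
    Finite.injective_iff_bijective.mp fun a b h =>
      Subtype.ext (σ.injective (Subtype.ext_iff.mp h))
  let e : Equiv.Perm (p.rootSet L) := Equiv.ofBijective _ hbij
  have hpow : ∀ (m : ℕ) (r : p.rootSet L), ((e ^ m) r : L) = (σ ^ m) r := by
    intro m
    induction m with
    | zero => intro r; simp
    | succ n ih =>
      intro r
      rw [pow_succ, pow_succ, Equiv.Perm.mul_apply, AlgEquiv.mul_apply, ih (e r)]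
      rfl
  have hcard : Fintype.card (p.rootSet L) ≤ d := by
    refine le_trans ?_ hdeg
    calc Fintype.card (p.rootSet L) = Nat.card (p.rootSet L) := Nat.card_eq_fintype_card.symm
      _ = (p.aroots L).toFinset.card := by rw [rootSet_def]; exact Nat.card_eq_finsetCard _
      _ ≤ p.natDegree := (Multiset.toFinset_card_le _).trans
          ((p.map (algebraMap K L)).card_roots'.trans natDegree_map_le)
  have he : e ^ d.factorial = 1 := by
    obtain ⟨k, hk⟩ := Nat.factorial_dvd_factorial hcard
    have h1 : e ^ (Fintype.card (p.rootSet L)).factorial = 1 := by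
      rw [← Fintype.card_perm]; exact pow_card_eq_one
    rw [hk, pow_mul, h1, one_pow]
  have hxr : x ∈ p.rootSet L := by
    rw [mem_rootSet]
    exact ⟨hp0, minpoly.aeval K x⟩
  have := hpow d.factorial ⟨x, hxr⟩
  rw [he] at this
  simpa using this.symm

lemma aux_main {k Ω : Type*} [Field k] [Field Ω] [Algebra k Ω] [IsAlgClosed Ω]
    [Algebra.IsAlgebraic k Ω] [CharZero k] (d : ℕ)
    (L : IntermediateField k Ω)
    (hL : L = ⨆ F ∈ {F : IntermediateField k Ω | Module.rank k F ≤ d}, F) :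
    IsGalois k ↥L ∧ ∀ σ : ↥L ≃ₐ[k] ↥L, σ ^ d.factorial = 1 := by
  haveI : IsAlgClosure k Ω := ⟨‹_›, ‹_›⟩
  have memL : ∀ x : Ω, (minpoly k x).natDegree ≤ d → x ∈ L := by
    intro x hx
    have hint : IsIntegral k x := Algebra.IsIntegral.isIntegral x
    haveI := adjoin.finiteDimensional hint
    have hrank : Module.rank k ↥k⟮x⟯ ≤ (d : Cardinal) := by
      rw [← Module.finrank_eq_rank, Nat.cast_le, adjoin.finrank hint]
      exact hx
    rw [hL]
    exact le_iSup₂ (f := fun (F : IntermediateField k Ω) (_ : Module.rank k F ≤ d) => F)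
      k⟮x⟯ hrank (mem_adjoin_simple_self k x)
  have hT : L = IntermediateField.adjoin k {x : Ω | (minpoly k x).natDegree ≤ d} := by
    apply le_antisymm
    · rw [hL]
      refine iSup₂_le fun F hF => ?_
      haveI : FiniteDimensional k F :=
        Module.rank_lt_aleph0_iff.mp (lt_of_le_of_lt hF (Cardinal.nat_lt_aleph0 d))
      intro x hx
      apply subset_adjoin
      have h1 : (minpoly k (⟨x, hx⟩ : ↥F)).natDegree ≤ Module.finrank k ↥F :=
        minpoly.natDegree_le _
      have h2 : Module.finrank k ↥F ≤ d := by
        have := hF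
        rw [Set.mem_setOf_eq, ← Module.finrank_eq_rank, Nat.cast_le] at this
        exact this
      have h3 := IntermediateField.minpoly_eq (⟨x, hx⟩ : ↥F)
      simp only [Set.mem_setOf_eq]
      rw [← h3]
      exact h1.trans h2
    · rw [adjoin_le_iff]
      intro x hx
      exact memL x hx
  haveI hnormal : Normal k ↥L := by
    refine IntermediateField.normal_iff_forall_map_le'.mpr fun σ => ?_
    conv_lhs => rw [hL]
    rw [IntermediateField.map_iSup]
    refine iSup_le fun F => ?_
    rw [IntermediateField.map_iSup]
    refine iSup_le fun hF => ?_
    have hrk : Module.rank k ↥(F.map (σ : Ω →ₐ[k] Ω)) ≤ (d : Cardinal) := by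
      rw [← (equivMap F (σ : Ω →ₐ[k] Ω)).toLinearEquiv.rank_eq]
      exact hF
    rw [hL]
    exact le_iSup₂ (f := fun (F : IntermediateField k Ω) (_ : Module.rank k F ≤ d) => F)
      (F.map (σ : Ω →ₐ[k] Ω)) hrk
  refine ⟨⟨⟩, fun σ => ?_⟩
  have hadj : Algebra.adjoin k {y : ↥L | (minpoly k y).natDegree ≤ d} = ⊤ := by
    apply Subalgebra.map_injective (f := L.val) L.val.toRingHom.injective
    rw [AlgHom.map_adjoin, Algebra.map_top, L.range_val]
    have himg : L.val '' {y : ↥L | (minpoly k y).natDegree ≤ d} =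
        {x : Ω | (minpoly k x).natDegree ≤ d} := by
      ext x
      constructor
      · rintro ⟨y, hy, rfl⟩
        show (minpoly k (↑y : Ω)).natDegree ≤ d
        rw [← IntermediateField.minpoly_eq]
        exact hy
      · intro hx
        exact ⟨⟨x, memL x hx⟩, by rw [Set.mem_setOf_eq, IntermediateField.minpoly_eq]; exact hx,
          rfl⟩
    rw [himg, ← adjoin_toSubalgebra_of_isAlgebraic (fun x _ => Algebra.IsAlgebraic.isAlgebraic x), ← hT]
  have key : Set.EqOn ((σ ^ d.factorial : ↥L ≃ₐ[k] ↥L) : ↥L →ₐ[k] ↥L) (AlgHom.id k ↥L)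
      {y : ↥L | (minpoly k y).natDegree ≤ d} := fun y hy =>
    aux_pow_factorial_fix σ (Algebra.IsIntegral.isIntegral y) hy
  have heq := AlgHom.ext_of_adjoin_eq_top hadj key
  exact AlgEquiv.ext fun y => DFunLike.congr_fun heq y

/-- For a number field `K` inside a fixed algebraic closure of `ℚ` and `d ≥ 1`, the
compositum `K^(d)` of all extensions of `K` of degree at most `d` is Galois over `K`, and
every element of `Gal(K^(d)/K)` has order dividing `d!`. -/
theorem compositum_deg_le_d_galois_and_exponent_dvd_factorial
    (K : IntermediateField ℚ (AlgebraicClosure ℚ))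
    (hK : FiniteDimensional ℚ K)
    (d : ℕ) (hd : 1 ≤ d) :
    IsGalois ↥K
      ↥(⨆ F ∈ {F : IntermediateField ↥K (AlgebraicClosure ℚ) |
          Module.rank ↥K F ≤ d}, F) ∧
    ∀ σ : ↥(⨆ F ∈ {F : IntermediateField ↥K (AlgebraicClosure ℚ) |
          Module.rank ↥K F ≤ d}, F) ≃ₐ[↥K]
        ↥(⨆ F ∈ {F : IntermediateField ↥K (AlgebraicClosure ℚ) |
          Module.rank ↥K F ≤ d}, F),
      σ ^ d.factorial = 1 := by
  haveI : Algebra.IsAlgebraic ↥K (AlgebraicClosure ℚ) :=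
    @Algebra.IsAlgebraic.tower_top ℚ ↥K (AlgebraicClosure ℚ) _ _ _ _ _ (AlgebraicClosure.instAlgebra ℚ)
      (@IsScalarTower.of_algebraMap_eq' ℚ ↥K (AlgebraicClosure ℚ) _ _ _ _ _ (AlgebraicClosure.instAlgebra ℚ)
        (Subsingleton.elim _ _)) (AlgebraicClosure.isAlgebraic ℚ)
  exact aux_main d _ rfl
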